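/- Let P and W be n-length sequences with a segmentation by breakpoints bp_0 < bp_1 < ... < bp_b, where each segment satisfies ED(W-segment k, P-segment k)² ≤ md(k)², with md(k) = ε_k·sqrt(r_k − l_{k-1}). If a w-length interval [i', i] overlaps segments k_l through k_r, then the means over that interval satisfy |μ_{P[i':i]} − μ_{W[i':i]}| ≤ sqrt((1/w)·Σ_{k=k_l}^{k_r} md(k)²). -/

import Mathlib

/-- General envelope bound `θ_seq` of the subsequence-based ELB: if the `w`-length
interval `[i', i]` overlaps segments `k_l` through `k_r`, each of which matches within
`md(k)`, then the means over `[i', i]` deviate by at most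
`sqrt((1/w)·Σ_{k=k_l}^{k_r} md(k)²)`. -/
theorem subseq_mean_bound_general (n b : ℕ) (p s : ℕ → ℝ)
    (bp : ℕ → ℕ) (md : ℕ → ℝ)
    (hmono : ∀ k, bp k < bp (k + 1)) (hend : bp b ≤ n)
    (kl kr : ℕ) (hklr : kl ≤ kr) (hkl : 1 ≤ kl) (hkr : kr ≤ b)
    (hseg : ∀ k, kl ≤ k → k ≤ kr →
      (∑ j ∈ Finset.Icc (bp (k - 1) + 1) (bp k), |s j - p j| ^ 2) ≤ md k ^ 2)
    (i' i : ℕ) (hi' : bp (kl - 1) < i') (hi'l : i' ≤ bp kl)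
    (hii : i' ≤ i) (hir : bp (kr - 1) < i) (hi : i ≤ bp kr) :
    |(∑ j ∈ Finset.Icc i' i, p j) / ((i : ℝ) - i' + 1)
        - (∑ j ∈ Finset.Icc i' i, s j) / ((i : ℝ) - i' + 1)|
      ≤ Real.sqrt ((1 / ((i : ℝ) - i' + 1)) * ∑ k ∈ Finset.Icc kl kr, md k ^ 2) := by
  set g : ℕ → ℝ := fun j => (p j - s j) ^ 2 with hg
  have hb : Monotone bp := monotone_nat_of_le_succ (fun k => (hmono k).le)
  have hwpos : (0 : ℝ) < (i : ℝ) - i' + 1 := by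
    have : (i' : ℝ) ≤ i := by exact_mod_cast hii
    linarith
  set w : ℝ := (i : ℝ) - i' + 1 with hwdef
  -- segment decomposition
  have hdecomp : ∀ m, kl ≤ m →
      ∑ k ∈ Finset.Icc kl m, ∑ j ∈ Finset.Ioc (bp (k - 1)) (bp k), g j
        = ∑ j ∈ Finset.Ioc (bp (kl - 1)) (bp m), g j := by
    intro m hm
    induction m, hm using Nat.le_induction with
    | base => simp
    | succ m hm ih =>
        rw [Finset.sum_Icc_succ_top (by omega : kl ≤ m + 1), ih]
        have h1 : bp (kl - 1) ≤ bp m := hb (by omega)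
        have h2 : bp m ≤ bp (m + 1) := hb (by omega)
        have := Finset.sum_Ioc_consecutive g h1 h2
        simpa using this
  -- bound on the sum of squared deviations over [i', i]
  have hsub : Finset.Icc i' i ⊆ Finset.Ioc (bp (kl - 1)) (bp kr) := by
    intro j hj
    simp only [Finset.mem_Icc, Finset.mem_Ioc] at hj ⊢
    omega
  have hstep1 : ∑ j ∈ Finset.Icc i' i, g j ≤ ∑ j ∈ Finset.Ioc (bp (kl - 1)) (bp kr), g j :=
    Finset.sum_le_sum_of_subset_of_nonneg hsub (fun j _ _ => by positivity)
  have hstep2 : ∑ j ∈ Finset.Ioc (bp (kl - 1)) (bp kr), g j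
      ≤ ∑ k ∈ Finset.Icc kl kr, md k ^ 2 := by
    rw [← hdecomp kr hklr]
    apply Finset.sum_le_sum
    intro k hk
    simp only [Finset.mem_Icc] at hk
    have := hseg k hk.1 hk.2
    rw [Finset.Icc_add_one_left_eq_Ioc] at this
    refine le_trans (le_of_eq ?_) this
    apply Finset.sum_congr rfl
    intro j _
    rw [hg]
    rw [sq_abs]
    ring
  have hsum : ∑ j ∈ Finset.Icc i' i, g j ≤ ∑ k ∈ Finset.Icc kl kr, md k ^ 2 :=
    hstep1.trans hstep2
  -- Cauchy–Schwarz / mean inequality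
  have hcard : ((Finset.Icc i' i).card : ℝ) = w := by
    rw [Nat.card_Icc]
    push_cast [Nat.cast_sub (by omega : i' ≤ i + 1)]
    rw [hwdef]; ring
  have hCS : (∑ j ∈ Finset.Icc i' i, (p j - s j)) ^ 2 ≤ w * ∑ j ∈ Finset.Icc i' i, g j := by
    have := sq_sum_le_card_mul_sum_sq (s := Finset.Icc i' i) (f := fun j => p j - s j)
    rw [hcard] at this
    exact this
  -- finish
  have hdiff : (∑ j ∈ Finset.Icc i' i, p j) / w - (∑ j ∈ Finset.Icc i' i, s j) / w
      = (∑ j ∈ Finset.Icc i' i, (p j - s j)) / w := by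
    rw [Finset.sum_sub_distrib, sub_div]
  rw [hdiff]
  apply Real.le_sqrt_of_sq_le
  rw [abs_div, div_pow, sq_abs, abs_of_pos hwpos]
  rw [div_le_iff₀ (by positivity)]
  calc (∑ j ∈ Finset.Icc i' i, (p j - s j)) ^ 2
      ≤ w * ∑ j ∈ Finset.Icc i' i, g j := hCS
    _ ≤ w * ∑ k ∈ Finset.Icc kl kr, md k ^ 2 := by
        exact mul_le_mul_of_nonneg_left hsum hwpos.le
    _ = 1 / w * (∑ k ∈ Finset.Icc kl kr, md k ^ 2) * w ^ 2 := by
        field_simp
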